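/- Let t ≥ 1 be an integer and let p, p̃ ∈ (0,1). If X₁, …, X_t are i.i.d. Bernoulli random variables with success probability p·p̃, then P(X₁ = X₂ = ⋯ = X_t = 0) ≤ (1 − p̃)^{tp/2} + exp(−t·I_p(p/2)), where I_p(x) = x log(x/p) + (1−x) log((1−x)/(1−p)) for x ∈ (0,1) is the Cramér transform of the Bernoulli(p) distribution. -/

import Mathlib

open MeasureTheory ProbabilityTheory

noncomputable section

/-- The Cramér transform `I_p(x) = x log(x/p) + (1−x) log((1−x)/(1−p))` of the
Bernoulli(`p`) distribution. -/
def cramerBernoulli (p x : ℝ) : ℝ :=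
  x * Real.log (x / p) + (1 - x) * Real.log ((1 - x) / (1 - p))

/-- The exponential of minus `t` times the Cramér transform at `p/2` equals
`2^t * r^(t - t*p/2)` where `r = (1-p)/(2-p)`. -/
lemma exp_cramer_eq (t : ℕ) (p : ℝ) (hp0 : 0 < p) (hp1 : p < 1) :
    Real.exp (-(t : ℝ) * cramerBernoulli p (p / 2)) =
      2 ^ t * ((1 - p) / (2 - p)) ^ ((t : ℝ) - (t : ℝ) * p / 2) := by
  have h2p : (0:ℝ) < 2 - p := by linarith
  have h1p : (0:ℝ) < 1 - p := by linarith
  have h1p2 : (0:ℝ) < 1 - p / 2 := by linarith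
  have hr0 : (0:ℝ) < (1 - p) / (2 - p) := div_pos h1p h2p
  have hrw : (2:ℝ) ^ t * ((1 - p) / (2 - p)) ^ ((t : ℝ) - (t : ℝ) * p / 2) =
      Real.exp ((t : ℝ) * Real.log 2 + ((t : ℝ) - (t : ℝ) * p / 2) * Real.log ((1 - p) / (2 - p))) := by
    rw [Real.exp_add, Real.rpow_def_of_pos hr0, mul_comm (Real.log ((1-p)/(2-p)))]
    congr 1
    rw [← Real.exp_log (show (0:ℝ) < 2 ^ t by positivity), Real.log_pow]
  rw [hrw]
  congr 1
  have hlr : Real.log ((1 - p) / (2 - p)) = Real.log (1 - p) - Real.log 2 - Real.log (1 - p / 2) := by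
    rw [Real.log_div (ne_of_gt h1p) (ne_of_gt h2p),
      show (2:ℝ) - p = 2 * (1 - p / 2) by ring,
      Real.log_mul (by norm_num) (ne_of_gt h1p2)]
    ring
  have hl2 : Real.log ((p / 2) / p) = -Real.log 2 := by
    rw [show (p / 2) / p = 2⁻¹ by field_simp, Real.log_inv]
  have hl3 : Real.log ((1 - p / 2) / (1 - p)) = Real.log (1 - p / 2) - Real.log (1 - p) :=
    Real.log_div (ne_of_gt h1p2) (ne_of_gt h1p)
  unfold cramerBernoulli
  rw [hl2, hl3, hlr]
  ring

/-- Key real inequality: `(1 - p*pt)^t ≤ (1-pt)^(t*p/2) + exp(-t * I_p(p/2))`. -/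
lemma key_real (t : ℕ) (p pt : ℝ) (hp0 : 0 < p) (hp1 : p < 1)
    (h0 : 0 < pt) (h1 : pt < 1) :
    (1 - p * pt) ^ t ≤ (1 - pt) ^ ((t : ℝ) * p / 2) +
      Real.exp (-(t : ℝ) * cramerBernoulli p (p / 2)) := by
  have h2p : (0:ℝ) < 2 - p := by linarith
  have h1p : (0:ℝ) < 1 - p := by linarith
  set r : ℝ := (1 - p) / (2 - p) with hr
  have hr0 : (0:ℝ) < r := div_pos h1p h2p
  have hr1 : r < 1 := (div_lt_one h2p).2 (by linarith)
  have hq0 : (0:ℝ) < 1 - pt := by linarith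
  have hq1 : 1 - pt < 1 := by linarith
  -- expand (1 - p*pt)^t via the binomial theorem
  have expand : (1 - p * pt) ^ t =
      ∑ k ∈ Finset.range (t + 1),
        (p ^ k * (1 - p) ^ (t - k) * (t.choose k : ℝ)) * (1 - pt) ^ k := by
    rw [show (1:ℝ) - p * pt = p * (1 - pt) + (1 - p) by ring, add_pow]
    exact Finset.sum_congr rfl fun k _ => by rw [mul_pow]; ring
  have sum_one : ∑ k ∈ Finset.range (t + 1),
      (p ^ k * (1 - p) ^ (t - k) * (t.choose k : ℝ)) = 1 := by
    have := add_pow p (1 - p) t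
    simp only [show p + (1 - p) = 1 by ring, one_pow] at this
    exact this.symm
  have sum_r : ∑ k ∈ Finset.range (t + 1),
      (p ^ k * (1 - p) ^ (t - k) * (t.choose k : ℝ)) * r ^ k = (2 * r) ^ t := by
    have h := add_pow (p * r) (1 - p) t
    have h2r : p * r + (1 - p) = 2 * r := by
      rw [hr]; field_simp; ring
    rw [h2r] at h
    rw [h]
    exact Finset.sum_congr rfl fun k _ => by rw [mul_pow]; ring
  have hbker : ∀ k ∈ Finset.range (t + 1),
      (p ^ k * (1 - p) ^ (t - k) * (t.choose k : ℝ)) * (1 - pt) ^ k ≤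
      (p ^ k * (1 - p) ^ (t - k) * (t.choose k : ℝ)) *
        ((1 - pt) ^ ((t : ℝ) * p / 2) + r ^ ((k : ℝ) - (t : ℝ) * p / 2)) := by
    intro k _
    have hb0 : (0:ℝ) ≤ p ^ k * (1 - p) ^ (t - k) * (t.choose k : ℝ) := by positivity
    refine mul_le_mul_of_nonneg_left ?_ hb0
    rcases le_or_gt ((t : ℝ) * p / 2) (k : ℝ) with hk | hk
    · have h1 : (1 - pt) ^ k ≤ (1 - pt) ^ ((t : ℝ) * p / 2) := by
        rw [← Real.rpow_natCast (1 - pt) k]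
        exact Real.rpow_le_rpow_of_exponent_ge hq0 (le_of_lt hq1) hk
      have h2 : (0:ℝ) ≤ r ^ ((k : ℝ) - (t : ℝ) * p / 2) := (Real.rpow_pos_of_pos hr0 _).le
      linarith
    · have h1 : (1 - pt) ^ k ≤ 1 := pow_le_one₀ hq0.le hq1.le
      have h2 : (1:ℝ) ≤ r ^ ((k : ℝ) - (t : ℝ) * p / 2) :=
        Real.one_le_rpow_of_pos_of_le_one_of_nonpos hr0 hr1.le (by linarith)
      have h3 : (0:ℝ) ≤ (1 - pt) ^ ((t : ℝ) * p / 2) := (Real.rpow_pos_of_pos hq0 _).le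
      linarith
  calc (1 - p * pt) ^ t
      ≤ ∑ k ∈ Finset.range (t + 1),
        (p ^ k * (1 - p) ^ (t - k) * (t.choose k : ℝ)) *
          ((1 - pt) ^ ((t : ℝ) * p / 2) + r ^ ((k : ℝ) - (t : ℝ) * p / 2)) := by
        rw [expand]; exact Finset.sum_le_sum hbker
    _ = (1 - pt) ^ ((t : ℝ) * p / 2) +
        r ^ (-((t : ℝ) * p / 2)) * (2 * r) ^ t := by
        simp only [mul_add]
        rw [Finset.sum_add_distrib]
        congr 1
        · rw [← Finset.sum_mul, sum_one, one_mul]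
        · rw [← sum_r, Finset.mul_sum]
          refine Finset.sum_congr rfl fun k _ => ?_
          rw [show (k : ℝ) - (t : ℝ) * p / 2 = -((t : ℝ) * p / 2) + (k : ℝ) by ring,
            Real.rpow_add hr0, Real.rpow_natCast]
          ring
    _ = (1 - pt) ^ ((t : ℝ) * p / 2) +
        Real.exp (-(t : ℝ) * cramerBernoulli p (p / 2)) := by
        congr 1
        rw [exp_cramer_eq t p hp0 hp1, Real.rpow_sub hr0, Real.rpow_neg hr0.le,
          mul_pow, ← Real.rpow_natCast r t]
        field_simp

/-- Let `t ≥ 1` and `p, p̃ ∈ (0,1)`.  If `X₁, …, X_t` are i.i.d.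
Bernoulli with success probability `p·p̃`, then
`P(X₁ = ⋯ = X_t = 0) ≤ (1 − p̃)^{tp/2} + exp(−t·I_p(p/2))`. -/
theorem bernoulli_all_zero_bound (t : ℕ) (ht : 1 ≤ t) (p ptilde : ℝ)
    (hp0 : 0 < p) (hp1 : p < 1) (hpt0 : 0 < ptilde) (hpt1 : ptilde < 1)
    {Ω : Type} [MeasurableSpace Ω] (μ : Measure Ω) [IsProbabilityMeasure μ]
    (X : Fin t → Ω → Bool) (hmeas : ∀ i, Measurable (X i))
    (hindep : iIndepFun X μ)
    (hlaw : ∀ i, μ {ω | X i ω = true} = ENNReal.ofReal (p * ptilde)) :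
    μ {ω | ∀ i, X i ω = false} ≤
      ENNReal.ofReal ((1 - ptilde) ^ ((t : ℝ) * p / 2) +
        Real.exp (-(t : ℝ) * cramerBernoulli p (p / 2))) := by
  have hpp : 0 < p * ptilde := mul_pos hp0 hpt0
  have hpp1 : p * ptilde < 1 := by nlinarith
  have hset : {ω | ∀ i, X i ω = false} = ⋂ i, X i ⁻¹' {false} := by
    ext ω; simp [Set.mem_iInter]
  have hmeasF : ∀ i : Fin t, μ (X i ⁻¹' {false}) = ENNReal.ofReal (1 - p * ptilde) := by
    intro i
    have hcompl : X i ⁻¹' {false} = (X i ⁻¹' {true})ᶜ := by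
      ext ω; simp [Set.mem_preimage]
    have htrue : μ (X i ⁻¹' {true}) = ENNReal.ofReal (p * ptilde) := by
      have : X i ⁻¹' {true} = {ω | X i ω = true} := rfl
      rw [this, hlaw i]
    rw [hcompl, measure_compl ((hmeas i) (by trivial)) (measure_ne_top μ _), htrue,
      measure_univ]
    rw [← ENNReal.ofReal_one, ← ENNReal.ofReal_sub _ hpp.le]
  have hprod : μ (⋂ i, X i ⁻¹' {false}) = ∏ i : Fin t, μ (X i ⁻¹' {false}) := by
    apply hindep.meas_iInter
    intro i
    exact ⟨{false}, trivial, rfl⟩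
  rw [hset, hprod]
  have : ∏ i : Fin t, μ (X i ⁻¹' {false}) = ENNReal.ofReal ((1 - p * ptilde) ^ t) := by
    simp only [hmeasF, Finset.prod_const, Finset.card_univ, Fintype.card_fin]
    rw [ENNReal.ofReal_pow (by linarith)]
  rw [this]
  exact ENNReal.ofReal_le_ofReal (key_real t p ptilde hp0 hp1 hpt0 hpt1)

end
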